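/- The set 𝒞 = {x ∈ ℓ¹ \ c₀₀ : E(x) is homeomorphic to the Cantor set} is a dense Gδ subset of ℓ¹, hence residual. -/

import Mathlib

open Set Filter Topology

/-- The achievement set (set of all subsums) of a series `∑ x n`. -/
noncomputable def achSet (x : ℕ → ℝ) : Set ℝ :=
  {a : ℝ | ∃ A : Set ℕ, HasSum (fun n : A => x n) a}

/-- The tail sum `∑_{i > n} |x i|`. -/
noncomputable def tailSum (x : ℕ → ℝ) (n : ℕ) : ℝ := ∑' i : ℕ, |x (n + 1 + i)|

/-- `S` is a finite union of closed intervals. -/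
def IsFinUnionClosedIntervals (S : Set ℝ) : Prop :=
  ∃ s : Finset (ℝ × ℝ), S = ⋃ p ∈ s, Set.Icc p.1 p.2

/-- `S` is homeomorphic to the Cantor set (the Cantor space `ℕ → Bool`). -/
def CantorLike (S : Set ℝ) : Prop := Nonempty (S ≃ₜ (ℕ → Bool))

/-- Sequences which are not eventually zero. -/
def NotEventuallyZero (x : ℕ → ℝ) : Prop := ∀ N : ℕ, ∃ n ≥ N, x n ≠ 0

/-- The set `𝒞` inside `ℓ¹`: sequences which are not eventually zero and whose
achievement set is homeomorphic to the Cantor set. -/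
def mathcalC : Set (lp (fun _ : ℕ => ℝ) 1) :=
  {x | NotEventuallyZero (fun n => x n) ∧ CantorLike (achSet fun n => x n)}


namespace CantorAux


structure Nice (K : Set ℝ) : Prop where
  ne : K.Nonempty
  cpt : IsCompact K
  int : interior K = ∅
  acc : ∀ p ∈ K, ∀ ε > 0, ∃ q ∈ K, q ≠ p ∧ |q - p| < ε

theorem nice_split {K : Set ℝ} (h : Nice K) :
    ∃ P : Set ℝ × Set ℝ, P.1 ∪ P.2 = K ∧ Disjoint P.1 P.2 ∧ Nice P.1 ∧ Nice P.2 ∧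
      Metric.diam P.1 ≤ 2/3 * Metric.diam K ∧ Metric.diam P.2 ≤ 2/3 * Metric.diam K := by
  obtain ⟨ne, cpt, hint, acc⟩ := h
  have hbdd := cpt.isBounded
  set a := sInf K with ha'
  set b := sSup K with hb'
  have ha : a ∈ K := cpt.sInf_mem ne
  have hb : b ∈ K := cpt.sSup_mem ne
  have hle : ∀ x ∈ K, a ≤ x ∧ x ≤ b := fun x hx =>
    ⟨csInf_le hbdd.bddBelow hx, le_csSup hbdd.bddAbove hx⟩
  have hab : a < b := by
    obtain ⟨q, hqK, hq, -⟩ := acc a ha 1 one_pos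
    rcases lt_or_eq_of_le (hle q hqK).1 with h | h
    · exact lt_of_lt_of_le h (hle q hqK).2
    · exact absurd h.symm hq
  set d := b - a with hd'
  have hd : 0 < d := sub_pos.2 hab
  have hIoo : ¬ (Ioo (a + d/3) (b - d/3) ⊆ K) := by
    intro hsub
    have h2 : Ioo (a + d/3) (b - d/3) ⊆ interior K :=
      isOpen_Ioo.subset_interior_iff.2 hsub
    rw [hint, subset_empty_iff, Ioo_eq_empty_iff] at h2
    have := not_lt.1 h2
    linarith
  obtain ⟨m, hm, hmK⟩ := not_subset.1 hIoo
  rw [mem_Ioo] at hm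
  obtain ⟨δ, hδ, hball⟩ := Metric.isOpen_iff.1 cpt.isClosed.isOpen_compl m hmK
  have hfar : ∀ p ∈ K, δ ≤ |p - m| := by
    intro p hp
    by_contra hc
    exact hball (by simpa [Metric.mem_ball, Real.dist_eq] using not_le.1 hc) hp
  have hdiamK : b - a ≤ Metric.diam K := by
    have h3 := Metric.dist_le_diam_of_mem hbdd hb ha
    rw [Real.dist_eq] at h3
    calc b - a ≤ |b - a| := le_abs_self _
    _ ≤ _ := h3
  have ham : a < m := by linarith [hm.1]
  have hmb : m < b := by linarith [hm.2]
  refine ⟨(K ∩ Iic m, K ∩ Ici m), ?_, ?_, ?_, ?_, ?_, ?_⟩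
  · rw [← inter_union_distrib_left, Iic_union_Ici, inter_univ]
  · rw [Set.disjoint_left]
    rintro x ⟨hxK, hx1⟩ ⟨-, hx2⟩
    exact hmK (le_antisymm (mem_Iic.1 hx1) (mem_Ici.1 hx2) ▸ hxK)
  · refine ⟨⟨a, ha, ham.le⟩, cpt.inter_right isClosed_Iic,
      eq_empty_of_subset_empty ((interior_mono inter_subset_left).trans hint.subset), ?_⟩
    rintro p ⟨hpK, hpm⟩ ε hε
    have h1 : δ ≤ |p - m| := hfar p hpK
    rw [abs_of_nonpos (sub_nonpos.2 hpm), neg_sub] at h1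
    obtain ⟨q, hqK, hq, hlt⟩ := acc p hpK (min ε δ) (lt_min hε hδ)
    have hqm : q ≤ m := by
      have := (abs_lt.1 (lt_of_lt_of_le hlt (min_le_right _ _))).2
      linarith
    exact ⟨q, ⟨hqK, hqm⟩, hq, lt_of_lt_of_le hlt (min_le_left _ _)⟩
  · refine ⟨⟨b, hb, hmb.le⟩, cpt.inter_right isClosed_Ici,
      eq_empty_of_subset_empty ((interior_mono inter_subset_left).trans hint.subset), ?_⟩
    rintro p ⟨hpK, hpm⟩ ε hε
    have h1 : δ ≤ |p - m| := hfar p hpK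
    rw [abs_of_nonneg (sub_nonneg.2 hpm)] at h1
    obtain ⟨q, hqK, hq, hlt⟩ := acc p hpK (min ε δ) (lt_min hε hδ)
    have hqm : m ≤ q := by
      have := (abs_lt.1 (lt_of_lt_of_le hlt (min_le_right _ _))).1
      linarith
    exact ⟨q, ⟨hqK, hqm⟩, hq, lt_of_lt_of_le hlt (min_le_left _ _)⟩
  · calc Metric.diam (K ∩ Iic m) ≤ Metric.diam (Icc a m) :=
        by
          refine Metric.diam_mono ?_ (Metric.isBounded_Icc _ _)
          rintro x ⟨hxK, hxm⟩
          exact mem_Icc.2 ⟨(hle x hxK).1, hxm⟩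
    _ = m - a := Real.diam_Icc ham.le
    _ ≤ 2/3 * Metric.diam K := by
        have := hm.2; rw [hd'] at *; nlinarith [hdiamK]
  · calc Metric.diam (K ∩ Ici m) ≤ Metric.diam (Icc m b) :=
        by
          refine Metric.diam_mono ?_ (Metric.isBounded_Icc _ _)
          rintro x ⟨hxK, hxm⟩
          exact mem_Icc.2 ⟨hxm, (hle x hxK).2⟩
    _ = b - m := Real.diam_Icc hmb.le
    _ ≤ 2/3 * Metric.diam K := by
        have := hm.1; rw [hd'] at *; nlinarith [hdiamK]


open scoped Classical in
noncomputable def sp (K : Set ℝ) : Set ℝ × Set ℝ :=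
  if h : Nice K then (nice_split h).choose else (K, K)

theorem sp_spec {K : Set ℝ} (h : Nice K) :
    (sp K).1 ∪ (sp K).2 = K ∧ Disjoint (sp K).1 (sp K).2 ∧ Nice (sp K).1 ∧ Nice (sp K).2 ∧
      Metric.diam (sp K).1 ≤ 2/3 * Metric.diam K ∧
      Metric.diam (sp K).2 ≤ 2/3 * Metric.diam K := by
  classical
  rw [sp, dif_pos h]
  exact (nice_split h).choose_spec

noncomputable def node (K : Set ℝ) : List Bool → Set ℝ
  | [] => K
  | b :: l => if b then (sp (node K l)).2 else (sp (node K l)).1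

theorem node_nice {K : Set ℝ} (h : Nice K) : ∀ l, Nice (node K l) := by
  intro l
  induction l with
  | nil => exact h
  | cons b l ih =>
    rcases sp_spec ih with ⟨-, -, h1, h2, -, -⟩
    cases b
    · exact h1
    · exact h2

theorem node_subset {K : Set ℝ} (h : Nice K) (b : Bool) (l : List Bool) :
    node K (b :: l) ⊆ node K l := by
  have hu := (sp_spec (node_nice h l)).1
  cases b
  · exact hu ▸ subset_union_left
  · exact hu ▸ subset_union_right

theorem node_diam {K : Set ℝ} (h : Nice K) :
    ∀ l, Metric.diam (node K l) ≤ (2/3 : ℝ) ^ l.length * Metric.diam K := by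
  intro l
  induction l with
  | nil => simp [node]
  | cons b l ih =>
    have h2 : Metric.diam (node K (b :: l)) ≤ 2/3 * Metric.diam (node K l) := by
      rcases sp_spec (node_nice h l) with ⟨-, -, -, -, h5, h6⟩
      cases b
      · exact h5
      · exact h6
    calc Metric.diam (node K (b :: l)) ≤ 2/3 * Metric.diam (node K l) := h2
    _ ≤ 2/3 * ((2/3 : ℝ) ^ l.length * Metric.diam K) := by linarith
    _ = (2/3 : ℝ) ^ (b :: l).length * Metric.diam K := by
        simp [List.length_cons, pow_succ]; ring

theorem node_disj {K : Set ℝ} (h : Nice K) (l : List Bool) :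
    Disjoint (node K (false :: l)) (node K (true :: l)) := by
  have := (sp_spec (node_nice h l)).2.1
  simpa [node] using this

theorem node_cover {K : Set ℝ} (h : Nice K) (l : List Bool) (p : ℝ) (hp : p ∈ node K l) :
    ∃ b, p ∈ node K (b :: l) := by
  have hu := (sp_spec (node_nice h l)).1
  rw [← hu] at hp
  rcases hp with hp | hp
  · exact ⟨false, hp⟩
  · exact ⟨true, hp⟩

def pre (σ : ℕ → Bool) : ℕ → List Bool
  | 0 => []
  | n + 1 => σ n :: pre σ n

theorem pre_length (σ : ℕ → Bool) : ∀ n, (pre σ n).length = n := by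
  intro n; induction n with
  | zero => rfl
  | succ n ih => simp [pre, ih]

theorem pre_eq_of_agree {σ τ : ℕ → Bool} : ∀ n, (∀ i < n, σ i = τ i) → pre σ n = pre τ n := by
  intro n
  induction n with
  | zero => intro _; rfl
  | succ n ih =>
    intro hag
    simp only [pre]
    rw [hag n (Nat.lt_succ_self n), ih (fun i hi => hag i (Nat.lt_succ_of_lt hi))]

theorem mem_node_dist {K : Set ℝ} (h : Nice K) (l : List Bool) {p q : ℝ}
    (hp : p ∈ node K l) (hq : q ∈ node K l) :
    dist p q ≤ (2/3 : ℝ) ^ l.length * Metric.diam K :=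
  le_trans (Metric.dist_le_diam_of_mem (node_nice h l).cpt.isBounded hp hq) (node_diam h l)

theorem tendsto_pow23 (c : ℝ) :
    Tendsto (fun n : ℕ => (2/3 : ℝ) ^ n * c) atTop (𝓝 0) := by
  have := (tendsto_pow_atTop_nhds_zero_of_lt_one (by norm_num : (0:ℝ) ≤ 2/3)
    (by norm_num : (2/3 : ℝ) < 1)).mul_const c
  simpa using this

theorem brouwer {K : Set ℝ} (h : Nice K) : Nonempty (K ≃ₜ (ℕ → Bool)) := by
  classical
  have hnest : ∀ (σ : ℕ → Bool) (n : ℕ), node K (pre σ (n+1)) ⊆ node K (pre σ n) :=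
    fun σ n => node_subset h (σ n) (pre σ n)
  have hnonempty : ∀ σ : ℕ → Bool, (⋂ n, node K (pre σ n)).Nonempty := by
    intro σ
    exact IsCompact.nonempty_iInter_of_sequence_nonempty_isCompact_isClosed
      (fun n => node K (pre σ n)) (hnest σ) (fun n => (node_nice h _).ne)
      (node_nice h _).cpt (fun n => (node_nice h _).cpt.isClosed)
  choose f hf using hnonempty
  have hfmem : ∀ σ n, f σ ∈ node K (pre σ n) := fun σ n => mem_iInter.1 (hf σ) n
  have hfK : ∀ σ, f σ ∈ K := fun σ => hfmem σ 0
  -- injectivity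
  have hinj : Function.Injective f := by
    intro σ τ hfe
    by_contra hne
    have hex : ∃ i, σ i ≠ τ i := by
      by_contra hc
      push_neg at hc
      exact hne (funext hc)
    set n := Nat.find hex with hn
    have hag : ∀ i < n, σ i = τ i := fun i hi => not_not.1 (Nat.find_min hex hi)
    have hpre : pre σ n = pre τ n := pre_eq_of_agree n hag
    have hσ : f σ ∈ node K (σ n :: pre σ n) := hfmem σ (n+1)
    have hτ : f τ ∈ node K (τ n :: pre σ n) := by
      have := hfmem τ (n+1)
      simpa [pre, hpre] using this
    have hd := node_disj h (pre σ n)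
    have hne' : σ n ≠ τ n := Nat.find_spec hex
    cases hb : σ n <;> cases hc : τ n
    · exact hne' (hb.trans hc.symm)
    · rw [hb] at hσ; rw [hc] at hτ
      exact Set.disjoint_left.1 hd hσ (hfe ▸ hτ)
    · rw [hb] at hσ; rw [hc] at hτ
      exact Set.disjoint_left.1 hd (hfe ▸ hτ) hσ
    · exact hne' (hb.trans hc.symm)
  -- surjectivity onto K
  have hsurj : ∀ p ∈ K, ∃ σ, f σ = p := by
    intro p hp
    have step : ∀ l : List Bool, p ∈ node K l → ∃ b, p ∈ node K (b :: l) :=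
      fun l hl => node_cover h l p hl
    let F : ∀ n : ℕ, {l : List Bool // p ∈ node K l} := fun n =>
      Nat.rec ⟨[], hp⟩ (fun _ ih => ⟨(step ih.1 ih.2).choose :: ih.1,
        (step ih.1 ih.2).choose_spec⟩) n
    set σ : ℕ → Bool := fun n => ((F (n+1)).1).headI with hσ'
    have hFpre : ∀ n, pre σ n = (F n).1 := by
      intro n
      induction n with
      | zero => rfl
      | succ n ih =>
        show σ n :: pre σ n = ((F (n+1)).1)
        rw [ih]
        rfl
    have hpmem : ∀ n, p ∈ node K (pre σ n) := fun n => (hFpre n) ▸ (F n).2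
    refine ⟨σ, ?_⟩
    have hdist : ∀ n : ℕ, dist (f σ) p ≤ (2/3 : ℝ) ^ n * Metric.diam K := by
      intro n
      have := mem_node_dist h (pre σ n) (hfmem σ n) (hpmem n)
      simpa [pre_length] using this
    have : dist (f σ) p ≤ 0 := ge_of_tendsto' (tendsto_pow23 (Metric.diam K)) hdist
    exact dist_le_zero.1 this
  -- continuity
  have hcont : Continuous f := by
    rw [continuous_iff_continuousAt]
    intro σ
    rw [ContinuousAt, Metric.tendsto_nhds]
    intro ε hε
    obtain ⟨n, hn⟩ := ((tendsto_pow23 (Metric.diam K)).eventually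
      (gt_mem_nhds hε)).exists
    have hV : {τ : ℕ → Bool | ∀ i < n, τ i = σ i} ∈ 𝓝 σ := by
      have h1 : ∀ i : ℕ, {τ : ℕ → Bool | τ i = σ i} ∈ 𝓝 σ := by
        intro i
        exact ((isOpen_discrete ({σ i} : Set Bool)).preimage (continuous_apply (A := fun _ : ℕ => Bool) i)).mem_nhds rfl
      have h2 : (⋂ i ∈ Finset.range n, {τ : ℕ → Bool | τ i = σ i}) ∈ 𝓝 σ :=
        (Filter.biInter_mem (Finset.range n).finite_toSet).2 (fun i _ => h1 i)
      refine Filter.mem_of_superset h2 ?_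
      intro τ hτ
      simp only [mem_iInter, Finset.mem_coe, Finset.mem_range] at hτ
      exact fun i hi => hτ i hi
    refine Filter.mem_of_superset hV ?_
    intro τ hτ
    have hpre : pre τ n = pre σ n := pre_eq_of_agree n (fun i hi => hτ i hi)
    have h1 : f τ ∈ node K (pre σ n) := hpre ▸ hfmem τ n
    have h2 := mem_node_dist h (pre σ n) h1 (hfmem σ n)
    rw [pre_length] at h2
    exact lt_of_le_of_lt h2 hn
  -- assemble
  let f' : (ℕ → Bool) → K := fun σ => ⟨f σ, hfK σ⟩
  have hbij : Function.Bijective f' := by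
    constructor
    · intro σ τ hh
      exact hinj (congrArg Subtype.val hh)
    · rintro ⟨p, hp⟩
      obtain ⟨σ, hσ⟩ := hsurj p hp
      exact ⟨σ, Subtype.ext hσ⟩
  let e : (ℕ → Bool) ≃ K := Equiv.ofBijective f' hbij
  have hce : Continuous e := hcont.subtype_mk _
  exact ⟨(hce.homeoOfEquivCompactToT2 (f := e)).symm⟩



variable {x y : ℕ → ℝ}

theorem abs_tsum_le' {f : ℕ → ℝ} (hf : Summable fun n => |f n|) : |∑' n, f n| ≤ ∑' n, |f n| := by
  have h := norm_tsum_le_tsum_norm (f := f) (by simpa using hf)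
  simpa using h

theorem mem_achSet_iff (hx : Summable x) {a : ℝ} :
    a ∈ achSet x ↔ ∃ A : Set ℕ, a = ∑' n, Set.indicator A x n := by
  constructor
  · rintro ⟨A, hA⟩
    exact ⟨A, ((hasSum_subtype_iff_indicator.1 hA).tsum_eq).symm⟩
  · rintro ⟨A, rfl⟩
    exact ⟨A, hasSum_subtype_iff_indicator.2 ((hx.indicator A).hasSum)⟩

theorem zero_mem_achSet : (0 : ℝ) ∈ achSet x := by
  refine ⟨∅, ?_⟩
  have : IsEmpty ((∅ : Set ℕ) : Type) := by
    simp only [isEmpty_coe_sort]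
  exact hasSum_empty

theorem achSet_eq_range (hx : Summable x) :
    achSet x = Set.range (fun b : ℕ → Bool => ∑' n, if b n then x n else 0) := by
  classical
  ext a
  rw [mem_achSet_iff hx, Set.mem_range]
  constructor
  · rintro ⟨A, rfl⟩
    refine ⟨fun n => decide (n ∈ A), ?_⟩
    congr 1; funext n
    by_cases h : n ∈ A <;> simp [Set.indicator_apply, h]
  · rintro ⟨b, rfl⟩
    refine ⟨{n | b n = true}, ?_⟩
    congr 1; funext n
    by_cases h : b n <;> simp [Set.indicator_apply, h]

theorem isCompact_achSet (hx : Summable x) : IsCompact (achSet x) := by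
  rw [achSet_eq_range hx]
  apply isCompact_range
  refine continuous_tsum (u := fun n => |x n|) ?_ hx.abs ?_
  · intro i
    exact (continuous_of_discreteTopology (f := fun v : Bool => if v then x i else 0)).comp
      (continuous_apply (A := fun _ : ℕ => Bool) i)
  · intro n b
    by_cases h : b n <;> simp [h, Real.norm_eq_abs]

theorem achSet_acc (hx : Summable x) (hnez : NotEventuallyZero x) :
    ∀ a ∈ achSet x, ∀ ε > 0, ∃ a' ∈ achSet x, a' ≠ a ∧ |a' - a| < ε := by
  classical
  intro a ha ε hε
  have h0 : ∀ᶠ n in atTop, |x n| < ε := by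
    have := Metric.tendsto_nhds.1 hx.tendsto_atTop_zero ε hε
    simpa [Real.dist_eq] using this
  obtain ⟨N, hN⟩ := eventually_atTop.1 h0
  obtain ⟨n, hnN, hxn⟩ := hnez N
  rw [mem_achSet_iff hx] at ha
  obtain ⟨A, rfl⟩ := ha
  have hsingle : ∑' m, Set.indicator ({n} : Set ℕ) x m = x n := by
    rw [tsum_eq_single n]
    · simp
    · intro m hm
      simp [Set.indicator_apply, hm]
  by_cases hn : n ∈ A
  · refine ⟨∑' m, Set.indicator (A \ {n}) x m, (mem_achSet_iff hx).2 ⟨_, rfl⟩, ?_, ?_⟩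
    all_goals {
      have key : (fun m => Set.indicator A x m) =
          fun m => Set.indicator (A \ {n}) x m + Set.indicator ({n} : Set ℕ) x m := by
        funext m
        by_cases hm : m = n
        · subst hm; simp [Set.indicator_apply, hn]
        · by_cases hmA : m ∈ A <;> simp [Set.indicator_apply, hm, hmA]
      have h2 : ∑' m, Set.indicator A x m =
          ∑' m, Set.indicator (A \ {n}) x m + x n := by
        rw [key, Summable.tsum_add (hx.indicator _) (hx.indicator _), hsingle]
      rw [h2]
      first
      | · intro hcon; apply hxn; linarith [hcon]
      | · simpa [abs_sub_comm] using lt_of_le_of_lt (le_refl |x n|) (hN n hnN) }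
  · refine ⟨∑' m, Set.indicator (A ∪ {n}) x m, (mem_achSet_iff hx).2 ⟨_, rfl⟩, ?_, ?_⟩
    all_goals {
      have key : (fun m => Set.indicator (A ∪ {n}) x m) =
          fun m => Set.indicator A x m + Set.indicator ({n} : Set ℕ) x m := by
        funext m
        by_cases hm : m = n
        · subst hm; simp [Set.indicator_apply, hn]
        · by_cases hmA : m ∈ A <;> simp [Set.indicator_apply, hm, hmA]
      have h2 : ∑' m, Set.indicator (A ∪ {n}) x m =
          ∑' m, Set.indicator A x m + x n := by
        rw [key, Summable.tsum_add (hx.indicator _) (hx.indicator _), hsingle]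
      rw [h2]
      first
      | · intro hcon; apply hxn; linarith [hcon]
      | · simpa using lt_of_le_of_lt (le_refl |x n|) (hN n hnN) }

theorem tsum_indicator_sub_le (hu : Summable x) (hv : Summable y) (A : Set ℕ) :
    |∑' n, Set.indicator A x n - ∑' n, Set.indicator A y n| ≤ ∑' n, |x n - y n| := by
  rw [← Summable.tsum_sub (hu.indicator A) (hv.indicator A)]
  have hsub : Summable fun n => |x n - y n| := (hu.sub hv).abs
  have hdom : ∀ n, |Set.indicator A x n - Set.indicator A y n| ≤ |x n - y n| := by
    intro n
    by_cases h : n ∈ A <;> simp [Set.indicator_apply, h, abs_nonneg]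
  have hsum2 : Summable fun n => |Set.indicator A x n - Set.indicator A y n| :=
    Summable.of_nonneg_of_le (fun n => abs_nonneg _) hdom hsub
  calc |∑' n, (Set.indicator A x n - Set.indicator A y n)|
      ≤ ∑' n, |Set.indicator A x n - Set.indicator A y n| := abs_tsum_le' hsum2
    _ ≤ ∑' n, |x n - y n| := Summable.tsum_le_tsum hdom hsum2 hsub

theorem achSet_subset_cover (hy : Summable y) (n : ℕ) :
    achSet y ⊆ ⋃ s ∈ (Finset.range n).powerset,
      Icc ((∑ i ∈ s, y i) - ∑' i, |y (i + n)|) ((∑ i ∈ s, y i) + ∑' i, |y (i + n)|) := by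
  classical
  intro a ha
  rw [mem_achSet_iff hy] at ha
  obtain ⟨A, rfl⟩ := ha
  set g := Set.indicator A y with hg'
  have hg : Summable g := hy.indicator A
  have hsplit : ∑ i ∈ Finset.range n, g i + ∑' i, g (i + n) = ∑' i, g i :=
    Summable.sum_add_tsum_nat_add n hg
  set s := (Finset.range n).filter (· ∈ A) with hs'
  have hs : ∑ i ∈ Finset.range n, g i = ∑ i ∈ s, y i := by
    rw [hs', Finset.sum_filter]
    refine Finset.sum_congr rfl (fun i _ => ?_)
    by_cases h : i ∈ A <;> simp [hg', Set.indicator_apply, h]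
  have htail_sum : Summable fun i => g (i + n) := (summable_nat_add_iff n).2 hg
  have habs_sum : Summable fun i => |y (i + n)| := ((summable_nat_add_iff n).2 hy).abs
  have hdom : ∀ i, |g (i + n)| ≤ |y (i + n)| := by
    intro i
    by_cases h : i + n ∈ A <;> simp [hg', Set.indicator_apply, h, abs_nonneg]
  have htail : |∑' i, g (i + n)| ≤ ∑' i, |y (i + n)| := by
    calc |∑' i, g (i + n)| ≤ ∑' i, |g (i + n)| := abs_tsum_le' htail_sum.abs
    _ ≤ _ := Summable.tsum_le_tsum hdom htail_sum.abs habs_sum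
  rw [mem_iUnion]
  refine ⟨s, ?_⟩
  rw [mem_iUnion]
  refine ⟨Finset.mem_powerset.2 (Finset.filter_subset _ _), ?_⟩
  rw [mem_Icc]
  have h1 := (abs_le.1 htail).1
  have h2 := (abs_le.1 htail).2
  constructor
  · have := hsplit
    rw [hs] at this
    linarith
  · have := hsplit
    rw [hs] at this
    linarith

section LpLayer

open scoped ENNReal

local notation "X" => lp (fun _ : ℕ => ℝ) 1

theorem summable_abs_coe (x : X) : Summable fun n => |x n| := by
  have h := Memℓp.summable (p := 1) (by norm_num) (lp.memℓp x)
  simpa only [ENNReal.toReal_one, Real.norm_eq_abs, Real.rpow_one, pow_one] using h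

theorem summable_coe (x : X) : Summable fun n => x n := (summable_abs_coe x).of_abs

theorem norm_eq_tsum_abs (x : X) : ‖x‖ = ∑' n, |x n| := by
  rw [lp.norm_eq_tsum_rpow (by norm_num) x]
  simp [Real.norm_eq_abs]

theorem dist_eq_tsum_abs (x y : X) : dist x y = ∑' n, |x n - y n| := by
  rw [dist_eq_norm, norm_eq_tsum_abs]
  have h : ∀ n : ℕ, (↑(x - y) : ∀ _ : ℕ, ℝ) n = x n - y n := by
    intro n; rw [lp.coeFn_sub]; rfl
  exact tsum_congr fun n => by rw [h n]

theorem continuous_eval (n : ℕ) : Continuous fun x : X => x n := by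
  have h : LipschitzWith 1 (fun x : X => x n) := by
    refine LipschitzWith.of_dist_le_mul fun x y => ?_
    rw [NNReal.coe_one, one_mul, Real.dist_eq, dist_eq_norm]
    have h1 := lp.norm_apply_le_norm one_ne_zero (x - y) n
    have h2 : (↑(x - y) : ∀ _ : ℕ, ℝ) n = x n - y n := by rw [lp.coeFn_sub]; rfl
    rw [h2] at h1
    simpa [Real.norm_eq_abs] using h1
  exact h.continuous

theorem cantorLike_of_interior_empty (x : X) (hnez : NotEventuallyZero fun n => x n)
    (hint : interior (achSet fun n => x n) = ∅) : CantorLike (achSet fun n => x n) :=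
  brouwer ⟨⟨0, zero_mem_achSet⟩, isCompact_achSet (summable_coe x), hint,
    achSet_acc (summable_coe x) hnez⟩

theorem interior_empty_of_cantorLike {S : Set ℝ} (h : CantorLike S) : interior S = ∅ := by
  obtain ⟨e⟩ := h
  have htd0 : IsTotallyDisconnected (univ : Set S) := by
    refine e.isEmbedding.isTotallyDisconnected ?_
    exact isTotallyDisconnected_of_totallyDisconnectedSpace _
  have htd : IsTotallyDisconnected S := by
    have h2 := (IsEmbedding.subtypeVal (p := (· ∈ S))).isTotallyDisconnected_image.2 htd0
    simpa [Set.image_univ, Subtype.range_val] using h2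
  by_contra hne
  obtain ⟨t, ht⟩ := nonempty_iff_ne_empty.2 hne
  obtain ⟨ε, hε, hball⟩ := Metric.isOpen_iff.1 isOpen_interior t ht
  have hIcc : Icc t (t + ε/2) ⊆ S := by
    intro z hz
    rw [mem_Icc] at hz
    have : z ∈ Metric.ball t ε := by
      rw [Metric.mem_ball, Real.dist_eq, abs_lt]
      constructor <;> linarith [hz.1, hz.2]
    exact interior_subset (hball this)
  have hsub := htd (Icc t (t + ε/2)) hIcc isPreconnected_Icc
  have ht1 : t ∈ Icc t (t + ε/2) := mem_Icc.2 ⟨le_refl t, by linarith⟩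
  have ht2 : t + ε/2 ∈ Icc t (t + ε/2) := mem_Icc.2 ⟨by linarith, le_refl _⟩
  have := hsub ht1 ht2
  linarith [this]

theorem mem_mathcalC_iff (x : X) :
    x ∈ mathcalC ↔ (NotEventuallyZero fun n => x n) ∧
      interior (achSet fun n => x n) = ∅ := by
  constructor
  · rintro ⟨h1, h2⟩
    exact ⟨h1, interior_empty_of_cantorLike h2⟩
  · rintro ⟨h1, h2⟩
    exact ⟨h1, cantorLike_of_interior_empty x h1 h2⟩

theorem interior_achSet_empty_iff (x : X) :
    interior (achSet fun n => x n) = ∅ ↔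
      ∀ p q : ℚ, (p : ℝ) < q → ¬ Icc (p : ℝ) (q : ℝ) ⊆ achSet fun n => x n := by
  constructor
  · intro hint p q hpq hsub
    have h1 : Ioo (p : ℝ) q ⊆ interior (achSet fun n => x n) :=
      isOpen_Ioo.subset_interior_iff.2 (Ioo_subset_Icc_self.trans hsub)
    obtain ⟨z, hz⟩ := nonempty_Ioo.2 hpq
    rw [hint] at h1
    exact h1 hz
  · intro h
    by_contra hne
    obtain ⟨t, ht⟩ := nonempty_iff_ne_empty.2 hne
    obtain ⟨ε, hε, hball⟩ := Metric.isOpen_iff.1 isOpen_interior t ht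
    obtain ⟨p, hp1, hp2⟩ := exists_rat_btwn (by linarith : t - ε < t)
    obtain ⟨q, hq1, hq2⟩ := exists_rat_btwn (by linarith : t < t + ε)
    refine h p q (by linarith) ?_
    intro z hz
    rw [mem_Icc] at hz
    have : z ∈ Metric.ball t ε := by
      rw [Metric.mem_ball, Real.dist_eq, abs_lt]
      constructor <;> linarith [hz.1, hz.2]
    exact interior_subset (hball this)

theorem isClosed_bad (p q : ℚ) :
    IsClosed {x : X | Icc (p : ℝ) (q : ℝ) ⊆ achSet fun n => x n} := by
  refine isClosed_of_closure_subset ?_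
  intro x hx t ht
  have hcl : IsClosed (achSet fun n => x n) := (isCompact_achSet (summable_coe x)).isClosed
  rw [← hcl.closure_eq, Metric.mem_closure_iff]
  intro ε hε
  obtain ⟨y, hy, hdist⟩ := Metric.mem_closure_iff.1 hx ε hε
  have hty : t ∈ achSet fun n => y n := hy ht
  obtain ⟨A, rfl⟩ := (mem_achSet_iff (summable_coe y)).1 hty
  refine ⟨∑' n, Set.indicator A (fun n => x n) n,
    (mem_achSet_iff (summable_coe x)).2 ⟨A, rfl⟩, ?_⟩
  rw [Real.dist_eq]
  calc |(∑' n, Set.indicator A (fun n => y n) n) - ∑' n, Set.indicator A (fun n => x n) n|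
      ≤ ∑' n, |y n - x n| := tsum_indicator_sub_le (summable_coe y) (summable_coe x) A
  _ = dist y x := (dist_eq_tsum_abs y x).symm
  _ < ε := by rw [dist_comm]; exact hdist

theorem isGδ_mathcalC : IsGδ mathcalC := by
  have heq : mathcalC = (⋂ N : ℕ, {x : X | ∃ n ≥ N, x n ≠ 0}) ∩
      ⋂ pq : ℚ × ℚ, {x : X | (pq.1 : ℝ) < (pq.2 : ℝ) →
        ¬ Icc (pq.1 : ℝ) (pq.2 : ℝ) ⊆ achSet fun n => x n} := by
    ext x
    rw [mem_mathcalC_iff, interior_achSet_empty_iff]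
    simp only [mem_inter_iff, mem_iInter, mem_setOf_eq]
    constructor
    · rintro ⟨h1, h2⟩
      exact ⟨fun N => h1 N, fun pq => h2 pq.1 pq.2⟩
    · rintro ⟨h1, h2⟩
      exact ⟨fun N => h1 N, fun p q => h2 (p, q)⟩
  rw [heq]
  refine IsGδ.inter ?_ ?_
  · refine IsGδ.iInter fun N => IsOpen.isGδ ?_
    have : {x : X | ∃ n ≥ N, x n ≠ 0} = ⋃ n, ⋃ _ : n ≥ N, (fun x : X => x n) ⁻¹' {0}ᶜ := by
      ext x
      simp [mem_iUnion]
    rw [this]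
    exact isOpen_iUnion fun n => isOpen_iUnion fun _ =>
      (isOpen_compl_singleton).preimage (continuous_eval n)
  · refine IsGδ.iInter fun pq => IsOpen.isGδ ?_
    by_cases hpq : (pq.1 : ℝ) < (pq.2 : ℝ)
    · have : {x : X | (pq.1 : ℝ) < (pq.2 : ℝ) →
          ¬ Icc (pq.1 : ℝ) (pq.2 : ℝ) ⊆ achSet fun n => x n} =
          {x : X | Icc (pq.1 : ℝ) (pq.2 : ℝ) ⊆ achSet fun n => x n}ᶜ := by
        ext x; simp [hpq]
      rw [this]
      exact (isClosed_bad pq.1 pq.2).isOpen_compl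
    · have : {x : X | (pq.1 : ℝ) < (pq.2 : ℝ) →
          ¬ Icc (pq.1 : ℝ) (pq.2 : ℝ) ⊆ achSet fun n => x n} = univ := by
        ext x; simp [hpq]
      rw [this]
      exact isOpen_univ

set_option maxHeartbeats 2000000 in
theorem dense_mathcalC : Dense mathcalC := by
  rw [Metric.dense_iff]
  intro x ε hε
  have hsx : Summable fun n => |x n| := summable_abs_coe x
  have htail : Tendsto (fun N : ℕ => ∑' i : ℕ, |x (i + N)|) atTop (𝓝 0) :=
    tendsto_sum_nat_add (fun j => |x j|)
  obtain ⟨N, hN⟩ := (htail.eventually (gt_mem_nhds (by positivity : (0:ℝ) < ε/8))).exists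
  set c : ℝ := ε/8 with hc
  have hcpos : 0 < c := by positivity
  set yf : ℕ → ℝ := fun n => if n < N then x n else c * (4⁻¹ : ℝ)^n with hyf
  have hgeo : Summable fun n : ℕ => c * (4⁻¹:ℝ)^n :=
    (summable_geometric_of_lt_one (by norm_num) (by norm_num)).mul_left c
  have habs : Summable fun n => |yf n| := by
    refine Summable.of_nonneg_of_le (fun n => abs_nonneg _) (fun n => ?_) (hsx.add hgeo)
    by_cases h : n < N
    · simp only [hyf, if_pos h]
      have h2 : (0:ℝ) ≤ c * 4⁻¹^n := by positivity
      linarith [abs_nonneg (x n)]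
    · simp only [hyf, if_neg h]
      have h2 : |c * (4⁻¹:ℝ)^n| = c * 4⁻¹^n := abs_of_nonneg (by positivity)
      rw [h2]
      linarith [abs_nonneg (x n)]
  have hyfsum : Summable yf := habs.of_abs
  set y : lp (fun _ : ℕ => ℝ) 1 := ⟨yf, memℓp_gen (by
    simpa only [ENNReal.toReal_one, Real.rpow_one, Real.norm_eq_abs] using habs)⟩ with hy'
  have hycoe : ∀ n, y n = yf n := fun n => rfl
  have hycoe' : (fun n => y n) = yf := rfl
  -- geometric tail computation
  have hgeoN : ∀ M : ℕ, ∑' i : ℕ, c * (4⁻¹:ℝ)^(i+M) = c * (4⁻¹:ℝ)^M * (1 - 4⁻¹)⁻¹ := by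
    intro M
    have h1 : ∀ i : ℕ, c * (4⁻¹:ℝ)^(i+M) = (c * (4⁻¹:ℝ)^M) * (4⁻¹:ℝ)^i := by
      intro i; rw [pow_add]; ring
    rw [tsum_congr h1, tsum_mul_left, tsum_geometric_of_lt_one (by norm_num) (by norm_num)]
  -- distance estimate
  have hdist : dist y x < ε := by
    rw [dist_eq_tsum_abs]
    have hf : Summable fun n => |y n - x n| := ((summable_coe y).sub (summable_coe x)).abs
    have hsplit := Summable.sum_add_tsum_nat_add (f := fun n => |y n - x n|) N hf
    have hzero : ∑ i ∈ Finset.range N, |y i - x i| = 0 := by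
      refine Finset.sum_eq_zero fun i hi => ?_
      rw [hycoe, hyf]
      simp [if_pos (Finset.mem_range.1 hi)]
    have hbound : ∑' i : ℕ, |y (i + N) - x (i + N)| ≤
        (∑' i : ℕ, c * (4⁻¹:ℝ)^(i+N)) + ∑' i : ℕ, |x (i + N)| := by
      have hsum1 : Summable fun i : ℕ => c * (4⁻¹:ℝ)^(i+N) := (summable_nat_add_iff N).2 hgeo
      have hsum2 : Summable fun i : ℕ => |x (i + N)| := (summable_nat_add_iff N).2 hsx
      rw [← Summable.tsum_add hsum1 hsum2]
      refine Summable.tsum_le_tsum (fun i => ?_) ((summable_nat_add_iff N).2 hf) (hsum1.add hsum2)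
      rw [hycoe, hyf]
      simp only [if_neg (by omega : ¬ (i + N < N))]
      calc |c * (4⁻¹:ℝ)^(i+N) - x (i+N)| ≤ |c * (4⁻¹:ℝ)^(i+N)| + |x (i+N)| := abs_sub _ _
      _ = c * (4⁻¹:ℝ)^(i+N) + |x (i+N)| := by rw [abs_of_nonneg (by positivity)]
    have hgeoval : (∑' i : ℕ, c * (4⁻¹:ℝ)^(i+N)) ≤ c * (4/3) := by
      rw [hgeoN N]
      have h4 : (4⁻¹:ℝ)^N ≤ 1 := pow_le_one₀ (by norm_num) (by norm_num)
      have : (1 - (4⁻¹:ℝ))⁻¹ = 4/3 := by norm_num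
      rw [this]
      nlinarith
    have htot : ∑' n, |y n - x n| = ∑' i : ℕ, |y (i + N) - x (i + N)| := by
      rw [← hsplit, hzero, zero_add]
    rw [htot]
    calc ∑' i : ℕ, |y (i + N) - x (i + N)|
        ≤ (∑' i : ℕ, c * (4⁻¹:ℝ)^(i+N)) + ∑' i : ℕ, |x (i + N)| := hbound
      _ < c * (4/3) + ε/8 := by
          have := hgeoval
          linarith [hN]
      _ < ε := by rw [hc]; linarith
  -- y ∈ mathcalC
  have hynez : NotEventuallyZero fun n => y n := by
    intro M
    refine ⟨max N M, le_max_right _ _, ?_⟩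
    show yf (max N M) ≠ 0
    rw [hyf]
    simp only [if_neg (not_lt.2 (le_max_left _ _))]
    positivity
  have hvol : MeasureTheory.volume (achSet fun n => y n) = 0 := by
    have hbound : ∀ m : ℕ, MeasureTheory.volume (achSet fun n => y n) ≤
        ENNReal.ofReal ((8*c/3) * (2⁻¹:ℝ)^(m+N)) := by
      intro m
      set n := m + N with hn'
      have hcover := achSet_subset_cover (y := yf) hyfsum n
      have hR : ∑' i : ℕ, |yf (i + n)| = c * (4/3) * (4⁻¹:ℝ)^n := by
        have h1 : ∀ i : ℕ, |yf (i + n)| = c * (4⁻¹:ℝ)^(i+n) := by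
          intro i
          rw [hyf]
          simp only [if_neg (by omega : ¬ (i + n < N))]
          exact abs_of_nonneg (by positivity)
        rw [tsum_congr h1, hgeoN n]
        norm_num
        ring
      set R : ℝ := ∑' i : ℕ, |yf (i + n)| with hR'
      have hvol1 : MeasureTheory.volume (achSet fun n => y n) ≤
          ∑ s ∈ (Finset.range n).powerset,
            MeasureTheory.volume (Icc ((∑ i ∈ s, yf i) - R) ((∑ i ∈ s, yf i) + R)) := by
        rw [hycoe']
        exact le_trans (MeasureTheory.measure_mono hcover)
          (MeasureTheory.measure_biUnion_finset_le _ _)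
      have hvol2 : ∀ s : Finset ℕ,
          MeasureTheory.volume (Icc ((∑ i ∈ s, yf i) - R) ((∑ i ∈ s, yf i) + R)) =
            ENNReal.ofReal (2 * R) := by
        intro s
        rw [Real.volume_Icc]
        congr 1
        ring
      have hcard : ((Finset.range n).powerset).card = 2^n := by
        rw [Finset.card_powerset, Finset.card_range]
      have hvol3 : MeasureTheory.volume (achSet fun n => y n) ≤
          (2^n : ℝ≥0∞) * ENNReal.ofReal (2 * R) := by
        refine le_trans hvol1 ?_
        rw [Finset.sum_congr rfl (fun s _ => hvol2 s), Finset.sum_const, hcard, nsmul_eq_mul]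
        norm_num
      refine le_trans hvol3 ?_
      have h2n : (2^n : ℝ≥0∞) = ENNReal.ofReal ((2:ℝ)^n) := by
        rw [ENNReal.ofReal_pow (by norm_num)]
        norm_num
      rw [h2n, ← ENNReal.ofReal_mul (by positivity)]
      refine ENNReal.ofReal_le_ofReal ?_
      rw [hR]
      have hpow : (2:ℝ)^n * (4⁻¹:ℝ)^n = (2⁻¹:ℝ)^n := by
        rw [← mul_pow]; norm_num
      calc (2:ℝ)^n * (2 * (c * (4/3) * (4⁻¹:ℝ)^n))
          = (8*c/3) * ((2:ℝ)^n * (4⁻¹:ℝ)^n) := by ring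
        _ = (8*c/3) * (2⁻¹:ℝ)^n := by rw [hpow]
        _ ≤ (8*c/3) * (2⁻¹:ℝ)^n := le_refl _
    have htend : Tendsto (fun m : ℕ => ENNReal.ofReal ((8*c/3) * (2⁻¹:ℝ)^(m+N)))
        atTop (𝓝 0) := by
      have h1 : Tendsto (fun k : ℕ => (8*c/3) * (2⁻¹:ℝ)^k) atTop (𝓝 0) := by
        have := (tendsto_pow_atTop_nhds_zero_of_lt_one
          (by norm_num : (0:ℝ) ≤ 2⁻¹) (by norm_num : (2⁻¹:ℝ) < 1)).const_mul (8*c/3)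
        simpa using this
      have h2 : Tendsto (fun m : ℕ => (8*c/3) * (2⁻¹:ℝ)^(m+N)) atTop (𝓝 0) :=
        h1.comp (tendsto_add_atTop_nat N)
      have h3 := ENNReal.tendsto_ofReal h2
      simpa using h3
    have : MeasureTheory.volume (achSet fun n => y n) ≤ 0 := ge_of_tendsto' htend hbound
    simpa using this
  have hint : interior (achSet fun n => y n) = ∅ := by
    by_contra hne
    obtain ⟨t, ht⟩ := nonempty_iff_ne_empty.2 hne
    have hpos := isOpen_interior.measure_pos MeasureTheory.volume ⟨t, ht⟩
    have hle : MeasureTheory.volume (interior (achSet fun n => y n)) ≤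
        MeasureTheory.volume (achSet fun n => y n) :=
      MeasureTheory.measure_mono interior_subset
    rw [hvol] at hle
    exact absurd (le_antisymm hle zero_le) (ne_of_gt hpos)
  exact ⟨y, Metric.mem_ball.2 hdist, (mem_mathcalC_iff y).2 ⟨hynez, hint⟩⟩

end LpLayer

end CantorAux

theorem mathcalC_dense_Gδ_residual :
    Dense mathcalC ∧ IsGδ mathcalC ∧ mathcalC ∈ residual (lp (fun _ : ℕ => ℝ) 1) := by
  have hd := CantorAux.dense_mathcalC
  have hg := CantorAux.isGδ_mathcalC
  exact ⟨hd, hg, residual_of_dense_Gδ hg hd⟩
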